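/- Let α > 0 and b be real numbers, and let ζ₀, ζ₁, ζ₂, ζ₃ be real numbers with ζ₁ > 0 satisfying: (i) ζ₂ = (α²/2)ζ₀ (the ν = 0 condition), (ii) the classical Bogomolov inequality ζ₁² − 2ζ₀ζ₂ ≥ 0, and (iii) the generalized Bogomolov–Gieseker inequality α²(ζ₁² − 2ζ₀ζ₂) + 4ζ₂² − 6ζ₁ζ₃ ≥ 0. Then ζ₃ − b·ζ₂ ≤ (α²/6 + (α/2)|b|)·ζ₁. -/
import Mathlib

theorem psi_le_potier_bound (α b ζ₀ ζ₁ ζ₂ ζ₃ : ℝ) (hα : 0 < α) (hζ₁ : 0 < ζ₁)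
    (hν : ζ₂ = (α ^ 2 / 2) * ζ₀)
    (hBog : ζ₁ ^ 2 - 2 * ζ₀ * ζ₂ ≥ 0)
    (hBG : α ^ 2 * (ζ₁ ^ 2 - 2 * ζ₀ * ζ₂) + 4 * ζ₂ ^ 2 - 6 * ζ₁ * ζ₃ ≥ 0) :
    ζ₃ - b * ζ₂ ≤ (α ^ 2 / 6 + (α / 2) * |b|) * ζ₁ := by
  subst hν
  have key : ζ₁ ^ 2 - α ^ 2 * ζ₀ ^ 2 ≥ 0 := by nlinarith
  have h3 : ζ₃ ≤ α ^ 2 / 6 * ζ₁ := by nlinarith [mul_pos hζ₁ hζ₁]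
  have h2 : |α ^ 2 / 2 * ζ₀| ≤ α / 2 * ζ₁ := by
    rw [abs_le]
    constructor <;> nlinarith [sq_nonneg (α * ζ₀ - ζ₁), sq_nonneg (α * ζ₀ + ζ₁)]
  have hb : -(b * (α ^ 2 / 2 * ζ₀)) ≤ α / 2 * |b| * ζ₁ := by
    calc -(b * (α ^ 2 / 2 * ζ₀)) ≤ |b * (α ^ 2 / 2 * ζ₀)| := neg_le_abs _
    _ = |b| * |α ^ 2 / 2 * ζ₀| := abs_mul _ _
    _ ≤ |b| * (α / 2 * ζ₁) := by
        exact mul_le_mul_of_nonneg_left h2 (abs_nonneg _)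
    _ = α / 2 * |b| * ζ₁ := by ring
  linarith
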